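/- Let $W$ be a finite Coxeter group with standard Coxeter element $c$, and let $u_1, u_2 \in W_c^+ = \{u : \ell_S(uc) = \ell_S(u) + \ell_S(c)\}$ with $u_2 = s^* u_1$ for a simple reflection $s^*$ with $\ell_S(u_2) = \ell_S(u_1) + 1$. Suppose $u_2 \not\le_B u_1 c$. Then no element of the Bruhat interval $[u_1, u_1 c]_B$ has $s^*$ as a left descent, and every element of $[u_2, u_2 c]_B$ has $s^*$ as a left descent; consequently the map $z \mapsto s^* z$ is a poset isomorphism from $[u_1, u_1 c]_B$ to $[u_2, u_2 c]_B$. -/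

import Mathlib

/-- The Bruhat cover relation. -/
def BruhatCover {B W : Type*} [Group W] {M : CoxeterMatrix B} (cs : CoxeterSystem M W)
    (u v : W) : Prop :=
  (∃ t : W, cs.IsReflection t ∧ v = u * t) ∧ cs.length v = cs.length u + 1

/-- The Bruhat order. -/
def BruhatLE {B W : Type*} [Group W] {M : CoxeterMatrix B} (cs : CoxeterSystem M W)
    (u v : W) : Prop :=
  Relation.ReflTransGen (BruhatCover cs) u v

/-- The Bruhat interval `[u, v]_B`. -/
def BruhatInterval {B W : Type*} [Group W] {M : CoxeterMatrix B} (cs : CoxeterSystem M W)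
    (u v : W) : Set W :=
  {z | BruhatLE cs u z ∧ BruhatLE cs z v}

/-- `c` is a standard Coxeter element. -/
def IsStandardCoxeterElement {B W : Type*} [Group W] {M : CoxeterMatrix B}
    (cs : CoxeterSystem M W) (c : W) : Prop :=
  ∃ l : List B, l.Nodup ∧ (∀ b : B, b ∈ l) ∧ c = cs.wordProd l

open CoxeterSystem List

namespace BruhatAux
open scoped Classical
noncomputable section
variable {B W : Type*} [Group W] {M : CoxeterMatrix B} (cs : CoxeterSystem M W)

def sigmaFun (i : B) : W × ℤˣ → W × ℤˣ :=
  fun p => (cs.simple i * p.1 * cs.simple i, if p.1 = cs.simple i then -p.2 else p.2)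

lemma simple_conj_eq_simple_iff (i : B) (t : W) :
    cs.simple i * t * cs.simple i = cs.simple i ↔ t = cs.simple i := by
  constructor
  · intro hh
    have : cs.simple i * (cs.simple i * t * cs.simple i) * cs.simple i
        = cs.simple i * cs.simple i * cs.simple i := by rw [hh]
    simp only [mul_assoc, cs.simple_mul_simple_cancel_left, cs.simple_mul_simple_self,
      mul_one] at this
    simpa [← mul_assoc, cs.simple_mul_simple_cancel_right] using this
  · rintro rfl
    simp [cs.simple_mul_simple_cancel_right]

lemma sigmaFun_invol (i : B) : Function.Involutive (sigmaFun cs i) := by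
  rintro ⟨t, e⟩
  by_cases h : t = cs.simple i
  · subst h
    simp [sigmaFun, cs.simple_mul_simple_cancel_left, cs.simple_mul_simple_cancel_right]
  · have h2 : cs.simple i * t * cs.simple i ≠ cs.simple i := by
      rw [Ne, simple_conj_eq_simple_iff]; exact h
    simp only [sigmaFun, if_neg h, if_neg h2]
    refine Prod.ext ?_ rfl
    simp [mul_assoc, cs.simple_mul_simple_cancel_left, cs.simple_mul_simple_self]

def sigma (i : B) : Equiv.Perm (W × ℤˣ) := (sigmaFun_invol cs i).toPerm

@[simp] lemma sigma_apply (i : B) (t : W) (e : ℤˣ) :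
    sigma cs i (t, e) = (cs.simple i * t * cs.simple i, if t = cs.simple i then -e else e) := rfl

/-- Sign change of one application of `sigma i ∘ sigma i'`. -/
def dFun (i i' : B) : W → ℤˣ := fun u =>
  (if u = cs.simple i' then -1 else 1) *
    (if cs.simple i' * u * cs.simple i' = cs.simple i then -1 else 1)

lemma tau_apply (i i' : B) (t : W) (e : ℤˣ) :
    (sigma cs i * sigma cs i') (t, e) =
      ((cs.simple i * cs.simple i') * t * (cs.simple i * cs.simple i')⁻¹,
        e * dFun cs i i' t) := by
  rw [Equiv.Perm.mul_apply, sigma_apply, sigma_apply]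
  refine Prod.ext ?_ ?_
  · simp [mul_inv_rev, cs.inv_simple, mul_assoc]
  · simp only [dFun]
    by_cases h1 : t = cs.simple i'
    · by_cases h2 : cs.simple i' * t * cs.simple i' = cs.simple i <;>
        simp [h1, h2]
    · by_cases h2 : cs.simple i' * t * cs.simple i' = cs.simple i <;>
        simp [h1, h2]

lemma tau_pow_apply (i i' : B) (n : ℕ) (t : W) (e : ℤˣ) :
    ((sigma cs i * sigma cs i') ^ n) (t, e) =
      ((cs.simple i * cs.simple i') ^ n * t * ((cs.simple i * cs.simple i') ^ n)⁻¹,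
        e * ∏ k ∈ Finset.range n,
          dFun cs i i' ((cs.simple i * cs.simple i') ^ k * t *
            ((cs.simple i * cs.simple i') ^ k)⁻¹)) := by
  induction n generalizing t e with
  | zero => simp
  | succ n ih =>
    rw [pow_succ, Equiv.Perm.mul_apply, tau_apply, ih]
    have harg : ∀ k : ℕ, (cs.simple i * cs.simple i') ^ k *
          ((cs.simple i * cs.simple i') * t * (cs.simple i * cs.simple i')⁻¹) *
          ((cs.simple i * cs.simple i') ^ k)⁻¹
        = (cs.simple i * cs.simple i') ^ (k+1) * t *
          ((cs.simple i * cs.simple i') ^ (k+1))⁻¹ := by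
      intro k
      rw [pow_succ, mul_inv_rev, mul_inv_rev]
      simp [mul_assoc]
    refine Prod.ext ?_ ?_
    · exact harg n
    · simp only []
      rw [Finset.prod_range_succ' (fun k => dFun cs i i'
        ((cs.simple i * cs.simple i') ^ k * t * ((cs.simple i * cs.simple i') ^ k)⁻¹)) n]
      simp only [harg]
      have : (cs.simple i * cs.simple i') ^ 0 * t * ((cs.simple i * cs.simple i') ^ 0)⁻¹ = t := by
        simp
      rw [this, mul_assoc,
        mul_comm (dFun cs i i' t)]



lemma aux (i i' : B) (k : ℕ) :
    cs.simple i' * (cs.simple i * cs.simple i') ^ k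
      = ((cs.simple i * cs.simple i') ^ k)⁻¹ * cs.simple i' := by
  induction k with
  | zero => simp
  | succ k ih =>
    have base : cs.simple i' * (cs.simple i * cs.simple i')
        = (cs.simple i * cs.simple i')⁻¹ * cs.simple i' := by
      simp [mul_inv_rev, cs.inv_simple, mul_assoc]
    rw [pow_succ, ← mul_assoc, ih, mul_assoc, base, ← mul_assoc, ← mul_inv_rev, ← pow_succ',
      pow_succ]

lemma cond1 (i i' : B) (k : ℕ) (t : W) :
    (cs.simple i * cs.simple i') ^ k * t * ((cs.simple i * cs.simple i') ^ k)⁻¹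
        = cs.simple i'
      ↔ t = (((cs.simple i * cs.simple i') ^ (2 * k))⁻¹ * cs.simple i') := by
  rw [mul_inv_eq_iff_eq_mul, aux cs i i' k, ← eq_inv_mul_iff_mul_eq, ← mul_assoc,
    ← mul_inv_rev, ← pow_add, two_mul]

lemma simple_conj_eq_iff (i i' : B) (u : W) :
    cs.simple i' * u * cs.simple i' = cs.simple i
      ↔ u = (cs.simple i * cs.simple i')⁻¹ * cs.simple i' := by
  constructor
  · intro h
    have := congrArg (fun z => cs.simple i' * z * cs.simple i') h
    simp only [mul_assoc, cs.simple_mul_simple_cancel_left, cs.simple_mul_simple_self,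
      mul_one] at this
    simp only [← mul_assoc] at this
    rw [this]
    simp [mul_inv_rev, cs.inv_simple]
  · rintro rfl
    simp [mul_inv_rev, cs.inv_simple, mul_assoc, cs.simple_mul_simple_cancel_left,
      cs.simple_mul_simple_self]

lemma cond2 (i i' : B) (k : ℕ) (t : W) :
    cs.simple i' * ((cs.simple i * cs.simple i') ^ k * t *
        ((cs.simple i * cs.simple i') ^ k)⁻¹) * cs.simple i' = cs.simple i
      ↔ t = (((cs.simple i * cs.simple i') ^ (2 * k + 1))⁻¹ * cs.simple i') := by
  rw [simple_conj_eq_iff, mul_inv_eq_iff_eq_mul, mul_assoc, aux cs i i' k, ← mul_assoc,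
    ← mul_inv_rev, ← pow_succ, ← eq_inv_mul_iff_mul_eq, ← mul_assoc, ← mul_inv_rev, ← pow_add]
  have : k + 1 + k = 2 * k + 1 := by omega
  rw [this]


lemma prod_double (F : ℕ → ℤˣ) (m : ℕ) :
    (∏ k ∈ Finset.range m, (F (2 * k) * F (2 * k + 1))) = ∏ a ∈ Finset.range (2 * m), F a := by
  induction m with
  | zero => simp
  | succ m ih =>
    rw [Finset.prod_range_succ, ih, show 2 * (m + 1) = 2 * m + 1 + 1 by omega,
      Finset.prod_range_succ, Finset.prod_range_succ, mul_assoc]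

lemma sigma_liftable : M.IsLiftable (sigma cs) := by
  intro i i'
  apply Equiv.ext
  rintro ⟨t, e⟩
  rw [tau_pow_apply]
  have hpm : (cs.simple i * cs.simple i') ^ M i i' = 1 := cs.simple_mul_simple_pow i i'
  have hone : ((1 : Equiv.Perm (W × ℤˣ))) (t, e) = (t, e) := rfl
  rw [hone]
  set F : ℕ → ℤˣ := fun a =>
    if t = ((cs.simple i * cs.simple i') ^ a)⁻¹ * cs.simple i' then -1 else 1 with hF
  have hfac : ∀ k : ℕ, dFun cs i i'
      ((cs.simple i * cs.simple i') ^ k * t * ((cs.simple i * cs.simple i') ^ k)⁻¹)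
        = F (2 * k) * F (2 * k + 1) := by
    intro k
    rw [dFun, hF]
    simp only [cond1 cs i i' k t, cond2 cs i i' k t]
  refine Prod.ext ?_ ?_
  · simp [hpm]
  · show e * ∏ k ∈ Finset.range (M i i'), _ = e
    have : (∏ k ∈ Finset.range (M i i'), dFun cs i i'
        ((cs.simple i * cs.simple i') ^ k * t * ((cs.simple i * cs.simple i') ^ k)⁻¹)) = 1 := by
      calc (∏ k ∈ Finset.range (M i i'), dFun cs i i'
            ((cs.simple i * cs.simple i') ^ k * t * ((cs.simple i * cs.simple i') ^ k)⁻¹))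
          = ∏ k ∈ Finset.range (M i i'), (F (2 * k) * F (2 * k + 1)) :=
            Finset.prod_congr rfl (fun k _ => hfac k)
        _ = ∏ a ∈ Finset.range (2 * M i i'), F a := prod_double F (M i i')
        _ = (∏ a ∈ Finset.range (M i i'), F a) * ∏ a ∈ Finset.range (M i i'), F (M i i' + a) := by
            rw [two_mul, Finset.prod_range_add]
        _ = (∏ a ∈ Finset.range (M i i'), F a) * ∏ a ∈ Finset.range (M i i'), F a := by
            congr 1
            refine Finset.prod_congr rfl (fun a _ => ?_)
            rw [hF]
            simp only [pow_add, hpm, one_mul]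
        _ = 1 := Int.units_mul_self _
    rw [this, mul_one]


/-- The sign representation homomorphism. -/
def phi : W →* Equiv.Perm (W × ℤˣ) := cs.lift ⟨sigma cs, sigma_liftable cs⟩

lemma phi_simple (i : B) : phi cs (cs.simple i) = sigma cs i :=
  cs.lift_apply_simple (sigma_liftable cs) i

lemma phi_wordProd (ω : List B) (t : W) (e : ℤˣ) :
    phi cs (cs.wordProd ω)⁻¹ (t, e) =
      ((cs.wordProd ω)⁻¹ * t * cs.wordProd ω,
        e * (-1) ^ ((cs.leftInvSeq ω).count t)) := by
  induction ω generalizing t e with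
  | nil => simp [phi]
  | cons i α ih =>
    have h1 : (cs.wordProd (i :: α))⁻¹ = (cs.wordProd α)⁻¹ * cs.simple i := by
      rw [cs.wordProd_cons, mul_inv_rev, cs.inv_simple]
    rw [h1, map_mul, Equiv.Perm.mul_apply, phi_simple, sigma_apply, ih]
    have hlis : cs.leftInvSeq (i :: α)
        = cs.simple i :: List.map (MulAut.conj (cs.simple i)) (cs.leftInvSeq α) := rfl
    have hconj : t = (MulAut.conj (cs.simple i)) (cs.simple i * t * cs.simple i) := by
      simp [MulAut.conj_apply, cs.inv_simple, mul_assoc, cs.simple_mul_simple_cancel_left,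
        cs.simple_mul_simple_self]
    have hcnt : (List.map (⇑(MulAut.conj (cs.simple i))) (cs.leftInvSeq α)).count t
        = (cs.leftInvSeq α).count (cs.simple i * t * cs.simple i) := by
      conv_lhs => rw [hconj]
      exact List.count_map_of_injective _ _ (MulAut.conj (cs.simple i)).injective _
    refine Prod.ext ?_ ?_
    · simp [cs.wordProd_cons, mul_inv_rev, cs.inv_simple, mul_assoc]
    · show (if t = cs.simple i then -e else e) * (-1) ^ _ = _
      rw [hlis, List.count_cons, hcnt]
      by_cases h : t = cs.simple i
      · simp [h, pow_succ, mul_neg, neg_mul, mul_comm, mul_left_comm]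
      · simp [h, Ne.symm h]

/-- The sign of a reflection `t` relative to `w`. -/
def eta (w t : W) : ℤˣ := ((phi cs w⁻¹) (t, 1)).2

lemma eta_wordProd (ω : List B) (t : W) :
    eta cs (cs.wordProd ω) t = (-1) ^ ((cs.leftInvSeq ω).count t) := by
  rw [eta, phi_wordProd, one_mul]

lemma eta_spec (w t : W) (e : ℤˣ) :
    (phi cs w⁻¹) (t, e) = (w⁻¹ * t * w, e * eta cs w t) := by
  obtain ⟨ω, _, rfl⟩ := cs.exists_reduced_word' w
  rw [phi_wordProd, eta_wordProd]

lemma eta_mul (a b t : W) :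
    eta cs (a * b) t = eta cs a t * eta cs b (a⁻¹ * t * a) := by
  have h : phi cs (a * b)⁻¹ (t, 1) = ((a * b)⁻¹ * t * (a * b), 1 * eta cs (a * b) t) :=
    eta_spec cs (a * b) t 1
  rw [mul_inv_rev, map_mul, Equiv.Perm.mul_apply, eta_spec, eta_spec] at h
  have := congrArg Prod.snd h
  simpa using this.symm

lemma eta_simple (i : B) (t : W) :
    eta cs (cs.simple i) t = if t = cs.simple i then -1 else 1 := by
  rw [eta, cs.inv_simple, phi_simple, sigma_apply]

lemma eta_one (u : W) : eta cs 1 u = 1 := by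
  rw [eta]; simp

lemma eta_refl (t : W) (ht : cs.IsReflection t) : eta cs t t = -1 := by
  obtain ⟨w, i, rfl⟩ := ht
  rw [mul_assoc, eta_mul,
    show w⁻¹ * (w * (cs.simple i * w⁻¹)) * w = cs.simple i from by group,
    eta_mul,
    show (cs.simple i)⁻¹ * cs.simple i * cs.simple i = cs.simple i from by group,
    eta_simple, if_pos rfl]
  have h3 : eta cs w (w * (cs.simple i * w⁻¹)) * eta cs w⁻¹ (cs.simple i) = 1 := by
    have h4 := eta_mul cs w w⁻¹ (w * (cs.simple i * w⁻¹))
    rw [show w⁻¹ * (w * (cs.simple i * w⁻¹)) * w = cs.simple i from by group,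
      mul_inv_cancel, eta_one] at h4
    exact h4.symm
  rw [neg_one_mul, mul_neg, h3]


lemma count_lis_odd_mem {ω : List B} (t : W)
    (h : eta cs (cs.wordProd ω) t = -1) : t ∈ cs.leftInvSeq ω := by
  by_contra hmem
  rw [eta_wordProd, List.count_eq_zero_of_not_mem hmem, pow_zero] at h
  exact absurd h (by decide)

lemma length_lt_of_eta_neg (w t : W) (h : eta cs w t = -1) :
    cs.length (t * w) < cs.length w := by
  obtain ⟨ω, hred, rfl⟩ := cs.exists_reduced_word' w
  exact (cs.isLeftInversion_of_mem_leftInvSeq hred (count_lis_odd_mem cs t h)).2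

lemma eta_neg_of_length_lt (w t : W) (ht : cs.IsReflection t)
    (h : cs.length (t * w) < cs.length w) : eta cs w t = -1 := by
  rcases Int.units_eq_one_or (eta cs w t) with h1 | h1
  · exfalso
    have htw : t * (t * w) = w := by rw [← mul_assoc, ht.mul_self, one_mul]
    have h2 : eta cs (t * w) t = -1 := by
      have hh := eta_mul cs t (t * w) t
      rw [htw, show t⁻¹ * t * t = t from by group, eta_refl cs t ht, h1, neg_one_mul] at hh
      exact neg_eq_iff_eq_neg.mp hh.symm
    have h3 := length_lt_of_eta_neg cs (t * w) t h2
    rw [htw] at h3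
    omega
  · exact h1

lemma strong_exchange_left {ω : List B} (hred : cs.IsReduced ω) {t : W}
    (ht : cs.IsReflection t)
    (h : cs.length (t * cs.wordProd ω) < cs.length (cs.wordProd ω)) :
    t ∈ cs.leftInvSeq ω :=
  count_lis_odd_mem cs t (eta_neg_of_length_lt cs _ t ht h)

lemma strong_exchange_right {ω : List B} (hred : cs.IsReduced ω) {t : W}
    (ht : cs.IsReflection t)
    (h : cs.length (cs.wordProd ω * t) < cs.length (cs.wordProd ω)) :
    t ∈ cs.rightInvSeq ω := by
  have h2 : cs.length (t * cs.wordProd ω.reverse) < cs.length (cs.wordProd ω.reverse) := by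
    rw [cs.wordProd_reverse]
    rw [show t * (cs.wordProd ω)⁻¹ = (cs.wordProd ω * t)⁻¹ from by rw [mul_inv_rev, ht.inv],
      cs.length_inv, cs.length_inv]
    exact h
  have h3 := strong_exchange_left cs ((cs.isReduced_reverse_iff ω).mpr hred) ht h2
  rw [cs.leftInvSeq_reverse] at h3
  exact List.mem_reverse.mp h3

lemma exchange_eraseIdx {ω : List B} (hred : cs.IsReduced ω) {t : W}
    (ht : cs.IsReflection t)
    (h : cs.length (cs.wordProd ω * t) < cs.length (cs.wordProd ω)) :
    ∃ m, m < ω.length ∧ cs.wordProd (ω.eraseIdx m) = cs.wordProd ω * t := by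
  obtain ⟨m, hm, hget⟩ := List.mem_iff_getElem.mp (strong_exchange_right cs hred ht h)
  rw [cs.length_rightInvSeq] at hm
  refine ⟨m, hm, ?_⟩
  rw [← cs.wordProd_mul_getD_rightInvSeq ω m]
  congr 1
  rw [List.getD_eq_getElem _ _ (by rw [cs.length_rightInvSeq]; exact hm)]
  exact hget


/-! ### Order lemmas -/

lemma bruhat_le_refl (x : W) : BruhatLE cs x x := Relation.ReflTransGen.refl

lemma bruhat_le_trans {x y z : W} (h1 : BruhatLE cs x y) (h2 : BruhatLE cs y z) :
    BruhatLE cs x z := Relation.ReflTransGen.trans h1 h2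

lemma bruhat_le_of_cover {x y : W} (h : BruhatCover cs x y) : BruhatLE cs x y :=
  Relation.ReflTransGen.single h

lemma cover_simple_mul_of_lt (i : B) (x : W)
    (h : cs.length x < cs.length (cs.simple i * x)) :
    BruhatCover cs x (cs.simple i * x) := by
  constructor
  · refine ⟨x⁻¹ * cs.simple i * x, ?_, ?_⟩
    · have := (cs.isReflection_simple i).conj x⁻¹
      simpa using this
    · group
  · rcases cs.length_simple_mul x i with h' | h' <;> omega

lemma simple_mul_le_self (i : B) (x : W)
    (h : cs.length (cs.simple i * x) < cs.length x) :
    BruhatLE cs (cs.simple i * x) x := by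
  have h2 : cs.length (cs.simple i * x) < cs.length (cs.simple i * (cs.simple i * x)) := by
    rw [cs.simple_mul_simple_cancel_left]; exact h
  have h3 := cover_simple_mul_of_lt cs i (cs.simple i * x) h2
  rw [cs.simple_mul_simple_cancel_left] at h3
  exact bruhat_le_of_cover cs h3

lemma le_simple_mul_self (i : B) (x : W)
    (h : cs.length x < cs.length (cs.simple i * x)) :
    BruhatLE cs x (cs.simple i * x) := bruhat_le_of_cover cs (cover_simple_mul_of_lt cs i x h)

lemma cover_simple_mul (i : B) {x y : W} (hc : BruhatCover cs x y)
    (hx : cs.length x < cs.length (cs.simple i * x))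
    (hy : cs.length y < cs.length (cs.simple i * y)) :
    BruhatCover cs (cs.simple i * x) (cs.simple i * y) := by
  obtain ⟨⟨t, ht, rfl⟩, hl⟩ := hc
  refine ⟨⟨t, ht, (mul_assoc _ _ _).symm⟩, ?_⟩
  rcases cs.length_simple_mul x i with h1 | h1 <;>
    rcases cs.length_simple_mul (x * t) i with h2 | h2 <;> omega

lemma cover_simple_mul_down (i : B) {x y : W} (hc : BruhatCover cs x y)
    (hx : cs.length (cs.simple i * x) < cs.length x)
    (hy : cs.length (cs.simple i * y) < cs.length y) :
    BruhatCover cs (cs.simple i * x) (cs.simple i * y) := by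
  obtain ⟨⟨t, ht, rfl⟩, hl⟩ := hc
  refine ⟨⟨t, ht, (mul_assoc _ _ _).symm⟩, ?_⟩
  rcases cs.length_simple_mul x i with h1 | h1 <;>
    rcases cs.length_simple_mul (x * t) i with h2 | h2 <;> omega

/-- If `x ⋖ y`, `s x > x` and `s y < y`, then `s x = y`. -/
lemma cover_up_down_eq (i : B) {x y : W} (hc : BruhatCover cs x y)
    (hx : cs.length x < cs.length (cs.simple i * x))
    (hy : cs.length (cs.simple i * y) < cs.length y) :
    cs.simple i * x = y := by
  obtain ⟨⟨t, ht, rfl⟩, hl⟩ := hc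
  obtain ⟨α, hα, hv⟩ := cs.exists_reduced_word' (cs.simple i * (x * t))
  have hπ : cs.wordProd (i :: α) = x * t := by
    rw [cs.wordProd_cons, ← hv, cs.simple_mul_simple_cancel_left]
  have hsxt : cs.length (cs.simple i * (x * t)) + 1 = cs.length (x * t) := by
    rcases cs.length_simple_mul (x * t) i with h' | h' <;> omega
  have hαl : cs.length (cs.simple i * (x * t)) = α.length := by
    rw [hv]; exact hα
  have hred : cs.IsReduced (i :: α) := by
    show cs.length (cs.wordProd (i :: α)) = (i :: α).length
    rw [hπ, List.length_cons]
    omega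
  have hlt : cs.length (cs.wordProd (i :: α) * t) < cs.length (cs.wordProd (i :: α)) := by
    rw [hπ, mul_assoc, ht.mul_self, mul_one]
    omega
  obtain ⟨m, hm, hme⟩ := exchange_eraseIdx cs hred ht hlt
  rw [hπ, mul_assoc, ht.mul_self, mul_one] at hme
  match m, hm with
  | 0, hm =>
    have h0 : cs.wordProd α = x := by
      rw [← hme]; rfl
    have hfact : cs.simple i * (x * t) = x := by rw [hv, h0]
    have h1 := congrArg (fun z => cs.simple i * z) hfact
    simp only [cs.simple_mul_simple_cancel_left] at h1
    exact h1.symm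
  | m' + 1, hm =>
    exfalso
    have he : (i :: α).eraseIdx (m' + 1) = i :: α.eraseIdx m' := rfl
    rw [he, cs.wordProd_cons] at hme
    have hsx : cs.wordProd (α.eraseIdx m') = cs.simple i * x := by
      rw [← hme, cs.simple_mul_simple_cancel_left]
    have hle : cs.length (cs.simple i * x) ≤ (α.eraseIdx m').length := by
      rw [← hsx]; exact cs.length_wordProd_le _
    have hml : m' < α.length := by
      simp only [List.length_cons] at hm; omega
    have her : (α.eraseIdx m').length + 1 = α.length :=
      List.length_eraseIdx_add_one hml
    omega

/-- Key lemma: if `x ≤ y` then `s x ≤ y` or `s x ≤ s y`. -/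
lemma ml (i : B) {x y : W} (h : BruhatLE cs x y) :
    BruhatLE cs (cs.simple i * x) y ∨ BruhatLE cs (cs.simple i * x) (cs.simple i * y) := by
  have h' : Relation.ReflTransGen (BruhatCover cs) x y := h
  clear h
  induction h' with
  | refl => exact Or.inr (bruhat_le_refl cs _)
  | @tail b c hb hbc ih =>
    rcases ih with ih | ih
    · exact Or.inl (bruhat_le_trans cs ih (bruhat_le_of_cover cs hbc))
    · rcases cs.length_simple_mul b i with hbu | hbd <;>
        rcases cs.length_simple_mul c i with hcu | hcd
      · exact Or.inr (bruhat_le_trans cs ih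
          (bruhat_le_of_cover cs (cover_simple_mul cs i hbc (by omega) (by omega))))
      · have he := cover_up_down_eq cs i hbc (by omega) (by omega)
        exact Or.inl (he ▸ ih)
      · exact Or.inl (bruhat_le_trans cs ih (bruhat_le_trans cs
          (simple_mul_le_self cs i b (by omega)) (bruhat_le_of_cover cs hbc)))
      · exact Or.inr (bruhat_le_trans cs ih
          (bruhat_le_of_cover cs (cover_simple_mul_down cs i hbc (by omega) (by omega))))

/-- Key lemma: if `x ≤ y` then `x ≤ s y` or `s x ≤ s y`. -/
lemma ml' (i : B) {x y : W} (h : BruhatLE cs x y) :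
    BruhatLE cs x (cs.simple i * y) ∨ BruhatLE cs (cs.simple i * x) (cs.simple i * y) := by
  have h' : Relation.ReflTransGen (BruhatCover cs) x y := h
  clear h
  induction h' with
  | refl => exact Or.inr (bruhat_le_refl cs _)
  | @tail b c hb hbc ih =>
    rcases cs.length_simple_mul b i with hbu | hbd <;>
      rcases cs.length_simple_mul c i with hcu | hcd
    · have hcov := cover_simple_mul cs i hbc (by omega) (by omega)
      rcases ih with ih | ih
      · exact Or.inl (bruhat_le_trans cs ih (bruhat_le_of_cover cs hcov))
      · exact Or.inr (bruhat_le_trans cs ih (bruhat_le_of_cover cs hcov))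
    · have he := cover_up_down_eq cs i hbc (by omega) (by omega)
      have he2 : cs.simple i * c = b := by rw [← he, cs.simple_mul_simple_cancel_left]
      exact Or.inl (he2 ▸ hb)
    · have hrest : BruhatLE cs b (cs.simple i * c) :=
        bruhat_le_trans cs (bruhat_le_of_cover cs hbc) (le_simple_mul_self cs i c (by omega))
      rcases ih with ih | ih
      · exact Or.inl (bruhat_le_trans cs ih
          (bruhat_le_trans cs (simple_mul_le_self cs i b (by omega)) hrest))
      · exact Or.inr (bruhat_le_trans cs ih
          (bruhat_le_trans cs (simple_mul_le_self cs i b (by omega)) hrest))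
    · have hcov := cover_simple_mul_down cs i hbc (by omega) (by omega)
      rcases ih with ih | ih
      · exact Or.inl (bruhat_le_trans cs ih (bruhat_le_of_cover cs hcov))
      · exact Or.inr (bruhat_le_trans cs ih (bruhat_le_of_cover cs hcov))

end
end BruhatAux

open BruhatAux

theorem stmt9 {B W : Type*} [Group W] [Finite W] {M : CoxeterMatrix B}
    (cs : CoxeterSystem M W) (c : W) (hc : IsStandardCoxeterElement cs c)
    (u₁ u₂ : W)
    (hu₁ : cs.length (u₁ * c) = cs.length u₁ + cs.length c)
    (hu₂ : cs.length (u₂ * c) = cs.length u₂ + cs.length c)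
    (j : B) (hcov : u₂ = cs.simple j * u₁)
    (hlen : cs.length u₂ = cs.length u₁ + 1)
    (hnotle : ¬ BruhatLE cs u₂ (u₁ * c)) :
    (∀ z ∈ BruhatInterval cs u₁ (u₁ * c),
        ¬ cs.length (cs.simple j * z) < cs.length z) ∧
    (∀ z ∈ BruhatInterval cs u₂ (u₂ * c),
        cs.length (cs.simple j * z) < cs.length z) ∧
    (∀ z ∈ BruhatInterval cs u₁ (u₁ * c),
        cs.simple j * z ∈ BruhatInterval cs u₂ (u₂ * c)) ∧
    (∀ z ∈ BruhatInterval cs u₂ (u₂ * c),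
        cs.simple j * z ∈ BruhatInterval cs u₁ (u₁ * c)) ∧
    (∀ z ∈ BruhatInterval cs u₁ (u₁ * c), ∀ z' ∈ BruhatInterval cs u₁ (u₁ * c),
        (BruhatLE cs z z' ↔ BruhatLE cs (cs.simple j * z) (cs.simple j * z'))) := by
  have hlen12 : cs.length (cs.simple j * u₁) = cs.length u₁ + 1 := by rw [← hcov]; exact hlen
  have hu2c : u₂ * c = cs.simple j * (u₁ * c) := by rw [hcov, mul_assoc]
  have hlc : cs.length (cs.simple j * (u₁ * c)) = cs.length (u₁ * c) + 1 := by
    rw [← hu2c, hu₂, hu₁, hlen]; omega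
  have le_u : BruhatLE cs u₁ u₂ := by
    rw [hcov]; exact le_simple_mul_self cs j u₁ (by omega)
  have le_c : BruhatLE cs (u₁ * c) (u₂ * c) := by
    rw [hu2c]; exact le_simple_mul_self cs j (u₁ * c) (by omega)
  have G1 : ∀ z ∈ BruhatInterval cs u₁ (u₁ * c),
      ¬ cs.length (cs.simple j * z) < cs.length z := by
    rintro z ⟨hz1, hz2⟩ hlt
    have hu2z : BruhatLE cs u₂ z := by
      rw [hcov]
      rcases ml cs j hz1 with h | h
      · exact h
      · exact bruhat_le_trans cs h (simple_mul_le_self cs j z hlt)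
    exact hnotle (bruhat_le_trans cs hu2z hz2)
  have G2 : ∀ z ∈ BruhatInterval cs u₂ (u₂ * c),
      cs.length (cs.simple j * z) < cs.length z := by
    rintro z ⟨hz1, hz2⟩
    rcases cs.length_simple_mul z j with hzu | hzd
    · exfalso
      rw [hu2c] at hz2
      rcases ml' cs j hz2 with h | h
      · rw [cs.simple_mul_simple_cancel_left] at h
        exact hnotle (bruhat_le_trans cs hz1 h)
      · rw [cs.simple_mul_simple_cancel_left] at h
        exact hnotle (bruhat_le_trans cs hz1
          (bruhat_le_trans cs (le_simple_mul_self cs j z (by omega)) h))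
    · omega
  have G3 : ∀ z ∈ BruhatInterval cs u₁ (u₁ * c),
      cs.simple j * z ∈ BruhatInterval cs u₂ (u₂ * c) := by
    rintro z ⟨hz1, hz2⟩
    refine ⟨?_, ?_⟩
    · rcases ml cs j hz1 with h | h
      · exfalso
        have hle : BruhatLE cs u₂ z := by rw [hcov]; exact h
        exact hnotle (bruhat_le_trans cs hle hz2)
      · rw [hcov]; exact h
    · rcases ml cs j hz2 with h | h
      · exact bruhat_le_trans cs h le_c
      · rw [hu2c]; exact h
  have G4 : ∀ z ∈ BruhatInterval cs u₂ (u₂ * c),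
      cs.simple j * z ∈ BruhatInterval cs u₁ (u₁ * c) := by
    rintro z ⟨hz1, hz2⟩
    refine ⟨?_, ?_⟩
    · rcases ml' cs j hz1 with h | h
      · exact bruhat_le_trans cs le_u h
      · rw [hcov, cs.simple_mul_simple_cancel_left] at h
        exact h
    · rcases ml' cs j hz2 with h | h
      · rw [hu2c, cs.simple_mul_simple_cancel_left] at h
        exact absurd (bruhat_le_trans cs hz1 h) hnotle
      · rw [hu2c, cs.simple_mul_simple_cancel_left] at h
        exact h
  have G5 : ∀ z ∈ BruhatInterval cs u₁ (u₁ * c), ∀ z' ∈ BruhatInterval cs u₁ (u₁ * c),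
      (BruhatLE cs z z' ↔ BruhatLE cs (cs.simple j * z) (cs.simple j * z')) := by
    rintro z hz z' hz'
    have hupz : cs.length z < cs.length (cs.simple j * z) := by
      have := G1 z hz; rcases cs.length_simple_mul z j with h | h <;> omega
    have hupz' : cs.length z' < cs.length (cs.simple j * z') := by
      have := G1 z' hz'; rcases cs.length_simple_mul z' j with h | h <;> omega
    constructor
    · intro h
      rcases ml cs j h with h2 | h2
      · exact bruhat_le_trans cs h2 (le_simple_mul_self cs j z' hupz')
      · exact h2
    · intro h
      rcases ml' cs j h with h2 | h2
      · rw [cs.simple_mul_simple_cancel_left] at h2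
        exact bruhat_le_trans cs (le_simple_mul_self cs j z hupz) h2
      · rw [cs.simple_mul_simple_cancel_left, cs.simple_mul_simple_cancel_left] at h2
        exact h2
  exact ⟨G1, G2, G3, G4, G5⟩
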